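/- Let X be a Bernoulli(p) source with p in (0,1) and t ≥ 1 an integer. Then the asymptotic rate of t-locally decodable almost lossless source coding with an F_2-linear encoder equals 1: R*(t) = lim_{ε→0} limsup_{n→∞} k*(n,ε,t)/n = 1, where k*(n,ε,t) is the minimum k for which there exist a linear encoder f: F_2^n → F_2^k and a t-local decoder g: F_2^k → F_2^n with P[g(f(X^n)) ≠ X^n] ≤ ε. -/

import Mathlib

open scoped Classical BigOperators
open Filter

noncomputable section

/-- Hamming weight of a binary vector. -/
def hw {n : ℕ} (x : Fin n → ZMod 2) : ℕ :=
  (Finset.univ.filter fun i => x i ≠ 0).card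

/-- Probability mass of a vector under the product Bernoulli(p) measure. -/
def pmass (p : ℝ) {n : ℕ} (x : Fin n → ZMod 2) : ℝ :=
  p ^ hw x * (1 - p) ^ (n - hw x)

/-- Probability of a set under the product Bernoulli(p) measure. -/
def pmeas (p : ℝ) {n : ℕ} (S : Set (Fin n → ZMod 2)) : ℝ :=
  ∑ x : Fin n → ZMod 2, if x ∈ S then pmass p x else 0

/-- A decoder is `t`-local if each output coordinate depends on at most `t`
input coordinates. -/
def IsLocal {k n : ℕ} (g : (Fin k → ZMod 2) → (Fin n → ZMod 2)) (t : ℕ) : Prop :=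
  ∀ a : Fin n, ∃ N : Finset (Fin k), N.card ≤ t ∧
    ∀ y y' : Fin k → ZMod 2, (∀ j ∈ N, y j = y' j) → g y a = g y' a

/-- The minimum number of encoded bits of a `t`-locally decodable almost
lossless source code with a linear encoder, block length `n`, and block error
probability at most `ε`, for the i.i.d. Bernoulli(p) source. -/
def kstarLin (p : ℝ) (n t : ℕ) (ε : ℝ) : ℕ :=
  sInf {k : ℕ | ∃ (G : Matrix (Fin n) (Fin k) (ZMod 2))
    (g : (Fin k → ZMod 2) → (Fin n → ZMod 2)), IsLocal g t ∧
      pmeas p {x | g (Matrix.vecMul x G) ≠ x} ≤ ε}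

lemma zmod2_ne : ∀ b : ZMod 2, b ≠ 0 → b = 1 := by decide
lemma zmod2_addself : ∀ b : ZMod 2, b + b = 0 := by decide
lemma zmod2_neadd1 : ∀ b : ZMod 2, b ≠ b + 1 := by decide
lemma zmod2_cancel : ∀ b c : ZMod 2, b + c = 0 → c = b := by decide

lemma pmass_eq_prod (p : ℝ) {n : ℕ} (x : Fin n → ZMod 2) :
    pmass p x = ∏ i : Fin n, (if x i ≠ 0 then p else 1 - p) := by
  rw [Finset.prod_ite, Finset.prod_const, Finset.prod_const]
  unfold pmass hw
  congr 2
  have := Finset.card_filter_add_card_filter_not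
    (s := (Finset.univ : Finset (Fin n))) (p := fun i => x i ≠ 0)
  simp only [Finset.card_univ, Fintype.card_fin] at this
  omega

lemma pmass_nonneg {p : ℝ} (hp0 : 0 < p) (hp1 : p < 1) {n : ℕ} (x : Fin n → ZMod 2) :
    0 ≤ pmass p x := by
  rw [pmass_eq_prod]
  exact Finset.prod_nonneg fun i _ => by split <;> linarith

lemma sum_pmass {p : ℝ} (hp0 : 0 < p) (hp1 : p < 1) {n : ℕ} :
    ∑ x : Fin n → ZMod 2, pmass p x = 1 := by
  simp only [pmass_eq_prod]
  rw [← Fintype.prod_sum (fun (_ : Fin n) (b : ZMod 2) => if b ≠ 0 then p else 1 - p)]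
  have h : ∀ i : Fin n, (∑ b : ZMod 2, if b ≠ 0 then p else 1 - p) = 1 := by
    intro i
    have : (Finset.univ : Finset (ZMod 2)) = {0, 1} := by decide
    rw [this, Finset.sum_insert (by decide), Finset.sum_singleton]
    norm_num
  rw [Finset.prod_congr rfl (fun i _ => h i), Finset.prod_const_one]

lemma pmass_add_ge {p : ℝ} (hp0 : 0 < p) (hp1 : p < 1) {n : ℕ}
    (x w : Fin n → ZMod 2) :
    (p * (1 - p)) ^ hw w * pmass p x ≤ pmass p (x + w) := by
  rw [pmass_eq_prod, pmass_eq_prod]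
  have key : ∀ i : Fin n,
      (if w i ≠ 0 then p * (1 - p) else 1) * (if x i ≠ 0 then p else 1 - p)
        ≤ (if (x + w) i ≠ 0 then p else 1 - p) := by
    intro i
    have hxw : (x + w) i = x i + w i := rfl
    by_cases hwi : w i = 0
    · simp [hwi, hxw]
    · have hw1 : w i = 1 := zmod2_ne _ hwi
      by_cases hxi : x i = 0
      · have h1 : ((0:ZMod 2) + 1 ≠ 0) := by decide
        rw [hxw, hw1, hxi]
        simp [h1, show (1:ZMod 2) ≠ 0 from by decide]
        nlinarith [mul_nonneg (mul_nonneg hp0.le hp0.le) (by linarith : (0:ℝ) ≤ 2 - p)]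
      · have hx1 : x i = 1 := zmod2_ne _ hxi
        have h2 : ((1:ZMod 2) + 1 = 0) := by decide
        rw [hxw, hw1, hx1, h2]
        simp [show (1:ZMod 2) ≠ 0 from by decide]
        nlinarith [mul_nonneg (mul_nonneg (by linarith : (0:ℝ) ≤ 1 - p) (by linarith : (0:ℝ) ≤ 1 - p)) (by linarith : (0:ℝ) ≤ 1 + p)]
  have hprod : ∏ i : Fin n, (if w i ≠ 0 then p * (1 - p) else 1) = (p * (1 - p)) ^ hw w := by
    rw [Finset.prod_ite, Finset.prod_const, Finset.prod_const_one, mul_one]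
    rfl
  calc (p * (1-p)) ^ hw w * ∏ i, (if x i ≠ 0 then p else 1 - p)
      = ∏ i, ((if w i ≠ 0 then p * (1 - p) else 1) * (if x i ≠ 0 then p else 1 - p)) := by
        rw [Finset.prod_mul_distrib, hprod]
    _ ≤ ∏ i, (if (x + w) i ≠ 0 then p else 1 - p) := by
        apply Finset.prod_le_prod
        · intro i _
          apply mul_nonneg
          · split <;> nlinarith
          · split <;> linarith
        · intro i _; exact key i

lemma pmeas_nonneg {p : ℝ} (hp0 : 0 < p) (hp1 : p < 1) {n : ℕ} (E : Set (Fin n → ZMod 2)) :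
    0 ≤ pmeas p E := by
  apply Finset.sum_nonneg
  intro x _
  split
  · exact pmass_nonneg hp0 hp1 x
  · exact le_refl 0

lemma pmeas_pair {p : ℝ} (hp0 : 0 < p) (hp1 : p < 1) {n s : ℕ}
    (w : Fin n → ZMod 2) (hws : hw w ≤ s) (E : Set (Fin n → ZMod 2))
    (hE : ∀ x, x ∈ E ∨ x + w ∈ E) :
    (p * (1 - p)) ^ s / 2 ≤ pmeas p E := by
  set c : ℝ := p * (1 - p) with hc
  have hc0 : 0 < c := by nlinarith
  have hc1 : c ≤ 1 := by nlinarith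
  have hcs0 : 0 < c ^ s := pow_pos hc0 s
  have hcpow : c ^ s ≤ c ^ hw w := pow_le_pow_of_le_one hc0.le hc1 hws
  have hww : ∀ y : Fin n → ZMod 2, y + w + w = y := by
    intro y; funext i
    show y i + w i + w i = y i
    rw [add_assoc, zmod2_addself, add_zero]
  have hP0 : 0 ≤ pmeas p E := pmeas_nonneg hp0 hp1 E
  have hB : (∑ x : Fin n → ZMod 2, if x + w ∈ E then pmass p x else 0)
      = ∑ y : Fin n → ZMod 2, if y ∈ E then pmass p (y + w) else 0 := by
    apply Fintype.sum_equiv (Equiv.addRight w)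
    intro x
    simp only [Equiv.coe_addRight]
    by_cases h : x + w ∈ E
    · simp [h, hww x]
    · simp [h]
  have hB2 : (∑ y : Fin n → ZMod 2, if y ∈ E then pmass p (y + w) else 0)
      ≤ pmeas p E / c ^ s := by
    rw [pmeas, Finset.sum_div]
    apply Finset.sum_le_sum
    intro y _
    by_cases h : y ∈ E
    · rw [if_pos h, if_pos h]
      rw [le_div_iff₀ hcs0]
      calc pmass p (y + w) * c ^ s ≤ c ^ hw w * pmass p (y + w) := by
            rw [mul_comm]
            exact mul_le_mul_of_nonneg_right hcpow (pmass_nonneg hp0 hp1 _)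
        _ ≤ pmass p (y + w + w) := pmass_add_ge hp0 hp1 _ _
        _ = pmass p y := by rw [hww]
    · rw [if_neg h, if_neg h]; positivity
  have hone : (1:ℝ) ≤ pmeas p E + pmeas p E / c ^ s := by
    have h1 : (1:ℝ) = ∑ x : Fin n → ZMod 2, pmass p x := (sum_pmass hp0 hp1).symm
    rw [h1]
    calc ∑ x : Fin n → ZMod 2, pmass p x
        ≤ ∑ x : Fin n → ZMod 2,
            ((if x ∈ E then pmass p x else 0) + (if x + w ∈ E then pmass p x else 0)) := by
          apply Finset.sum_le_sum
          intro x _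
          rcases hE x with h | h
          · rw [if_pos h]
            have : (0:ℝ) ≤ if x + w ∈ E then pmass p x else 0 := by
              split
              · exact pmass_nonneg hp0 hp1 x
              · exact le_refl 0
            linarith
          · rw [if_pos h]
            have : (0:ℝ) ≤ if x ∈ E then pmass p x else 0 := by
              split
              · exact pmass_nonneg hp0 hp1 x
              · exact le_refl 0
            linarith
      _ = pmeas p E + ∑ x : Fin n → ZMod 2, (if x + w ∈ E then pmass p x else 0) := by
          rw [Finset.sum_add_distrib]; rfl
      _ ≤ pmeas p E + pmeas p E / c ^ s := by
          rw [hB]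
          linarith [hB2]
  have hinv : c ^ s ≤ 1 := pow_le_one₀ hc0.le hc1
  rw [div_le_iff₀ (by norm_num : (0:ℝ) < 2)]
  have h3 := mul_le_mul_of_nonneg_right hone (le_of_lt hcs0)
  rw [add_mul, div_mul_cancel₀ _ (ne_of_gt hcs0), one_mul] at h3
  have h4 : pmeas p E * c ^ s ≤ pmeas p E * 1 := mul_le_mul_of_nonneg_left hinv hP0
  linarith

lemma exists_low_weight {n k t : ℕ} (hkn : k < n)
    (G : Matrix (Fin n) (Fin k) (ZMod 2)) (N : Fin n → Finset (Fin k))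
    (hNc : ∀ a, (N a).card ≤ t) :
    ∃ (a : Fin n) (w : Fin n → ZMod 2), w a = 1 ∧ hw w ≤ t + 1 ∧
      ∀ j ∈ N a, Matrix.vecMul w G j = 0 := by
  -- Step 1: find a and v (not necessarily low weight)
  have step1 : ∃ (a : Fin n) (v : Fin n → ZMod 2),
      (∀ j ∈ N a, Matrix.vecMul v G j = 0) ∧ v a ≠ 0 := by
    by_contra hcon
    push_neg at hcon
    have hinj : Function.Injective (fun v : Fin n → ZMod 2 => Matrix.vecMul v G) := by
      intro v v' hvv
      have hsum : Matrix.vecMul (v + v') G = 0 := by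
        rw [Matrix.add_vecMul]
        simp only at hvv
        rw [hvv]
        funext j
        exact zmod2_addself _
      have hz : v + v' = 0 := by
        funext a
        exact hcon a (v + v') (fun j _ => by rw [hsum]; rfl)
      funext i
      have : v i + v' i = 0 := by rw [show v i + v' i = (v + v') i from rfl, hz]; rfl
      exact zmod2_cancel (v' i) (v i) (by rw [add_comm]; exact this)
    have hcard := Fintype.card_le_of_injective _ hinj
    simp only [Fintype.card_fun, ZMod.card, Fintype.card_fin] at hcard
    have := (Nat.pow_le_pow_iff_right (by norm_num : 1 < 2)).1 hcard
    omega
  obtain ⟨a, v, hv0, hva⟩ := step1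
  have hva1 : v a = 1 := zmod2_ne _ hva
  -- The support of v minus a represents G a on N a
  set S : Finset (Fin n) := (Finset.univ.filter fun i => v i ≠ 0).erase a with hS
  have haS : a ∉ S := Finset.notMem_erase a _
  have hmemf : a ∈ Finset.univ.filter fun i => v i ≠ 0 := by
    simp [hva]
  have hSins : Finset.univ.filter (fun i => v i ≠ 0) = insert a S :=
    (Finset.insert_erase hmemf).symm
  set Rep : Finset (Fin n) → Prop := fun T => ∀ j ∈ N a, ∑ i ∈ T, G i j = G a j with hRepdef
  have hrepS : Rep S := by
    intro j hj
    have h1 : ∑ i : Fin n, v i * G i j = 0 := by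
      simpa [Matrix.vecMul, dotProduct] using hv0 j hj
    have h2 : ∑ i ∈ Finset.univ.filter (fun i => v i ≠ 0), v i * G i j
        = ∑ i : Fin n, v i * G i j := by
      apply Finset.sum_filter_of_ne
      intro i _ hne hvi
      exact hne (by rw [hvi, zero_mul])
    rw [hSins, Finset.sum_insert haS, hva1, one_mul] at h2
    have h3 : ∑ i ∈ S, v i * G i j = ∑ i ∈ S, G i j := by
      apply Finset.sum_congr rfl
      intro i hi
      have : v i ≠ 0 := by
        have := Finset.mem_of_mem_erase hi
        simpa using this
      rw [zmod2_ne _ this, one_mul]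
    rw [h3] at h2
    rw [h1] at h2
    exact zmod2_cancel _ _ h2
  -- minimal representing subset
  obtain ⟨T, hTmem, hTmin⟩ := Finset.exists_min_image (S.powerset.filter Rep) Finset.card
    ⟨S, Finset.mem_filter.2 ⟨Finset.mem_powerset.2 (le_refl S), hrepS⟩⟩
  obtain ⟨hTsub', hTrep⟩ := Finset.mem_filter.1 hTmem
  have hTsub : T ⊆ S := Finset.mem_powerset.1 hTsub'
  have hTt : T.card ≤ t := by
    by_contra hcard
    push_neg at hcard
    have hlt : Fintype.card ({j // j ∈ N a} → ZMod 2)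
        < Fintype.card {T' // T' ∈ T.powerset} := by
      rw [Fintype.card_fun, ZMod.card, Fintype.card_coe, Fintype.card_coe,
        Finset.card_powerset]
      calc 2 ^ (N a).card ≤ 2 ^ t := Nat.pow_le_pow_right (by norm_num) (hNc a)
        _ < 2 ^ T.card := Nat.pow_lt_pow_right (by norm_num) hcard
    obtain ⟨T1, T2, hne, heq⟩ := Fintype.exists_ne_map_eq_of_card_lt
      (fun T' : {T' // T' ∈ T.powerset} => fun j : {j // j ∈ N a} => ∑ i ∈ T'.1, G i j.1) hlt
    have hT1 : T1.1 ⊆ T := Finset.mem_powerset.1 T1.2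
    have hT2 : T2.1 ⊆ T := Finset.mem_powerset.1 T2.2
    set D : Finset (Fin n) := (T1.1 \ T2.1) ∪ (T2.1 \ T1.1) with hD
    have hDsub : D ⊆ T :=
      Finset.union_subset (Finset.sdiff_subset.trans hT1) (Finset.sdiff_subset.trans hT2)
    have hDne : D.Nonempty := by
      rw [Finset.nonempty_iff_ne_empty]
      intro hemp
      apply hne
      apply Subtype.ext
      have h12 : T1.1 \ T2.1 = ∅ ∧ T2.1 \ T1.1 = ∅ := by
        constructor <;>
          [exact Finset.union_eq_empty.1 hemp |>.1; exact Finset.union_eq_empty.1 hemp |>.2]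
      exact Finset.Subset.antisymm (Finset.sdiff_eq_empty_iff_subset.1 h12.1)
        (Finset.sdiff_eq_empty_iff_subset.1 h12.2)
    have hDsum : ∀ j ∈ N a, ∑ i ∈ D, G i j = 0 := by
      intro j hj
      have hjj : ∀ (T' : Finset (Fin n)) (h : T' ⊆ T'), True := fun _ _ => trivial
      have heqj : ∑ i ∈ T1.1, G i j = ∑ i ∈ T2.1, G i j :=
        congrFun heq ⟨j, hj⟩
      have hdisj : Disjoint (T1.1 \ T2.1) (T2.1 \ T1.1) := disjoint_sdiff_sdiff
      rw [hD, Finset.sum_union hdisj]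
      have e1 : ∑ i ∈ T1.1 \ T2.1, G i j = ∑ i ∈ T1.1, G i j - ∑ i ∈ T1.1 ∩ T2.1, G i j := by
        rw [← Finset.sdiff_inter_self_left T1.1 T2.1]
        exact eq_sub_of_add_eq (Finset.sum_sdiff Finset.inter_subset_left)
      have e2 : ∑ i ∈ T2.1 \ T1.1, G i j = ∑ i ∈ T2.1, G i j - ∑ i ∈ T2.1 ∩ T1.1, G i j := by
        rw [← Finset.sdiff_inter_self_left T2.1 T1.1]
        exact eq_sub_of_add_eq (Finset.sum_sdiff Finset.inter_subset_left)
      rw [e1, e2, ← heqj, Finset.inter_comm T2.1 T1.1]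
      exact zmod2_addself _
    have hTD : T \ D ∈ S.powerset.filter Rep := by
      refine Finset.mem_filter.2 ⟨Finset.mem_powerset.2 ((Finset.sdiff_subset).trans hTsub), ?_⟩
      intro j hj
      have := Finset.sum_sdiff hDsub (f := fun i => G i j)
      rw [hDsum j hj, add_zero] at this
      rw [this]
      exact hTrep j hj
    have hlt2 : (T \ D).card < T.card := by
      rw [Finset.card_sdiff_of_subset hDsub]
      have h1 : 0 < D.card := Finset.card_pos.2 hDne
      have h2 : D.card ≤ T.card := Finset.card_le_card hDsub
      omega
    exact absurd (hTmin _ hTD) (by omega)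
  -- build w
  have haT : a ∉ T := fun h => haS (hTsub h)
  refine ⟨a, fun i => if i = a ∨ i ∈ T then 1 else 0, by simp, ?_, ?_⟩
  · have hfil : (Finset.univ.filter fun i =>
        (if i = a ∨ i ∈ T then (1:ZMod 2) else 0) ≠ 0) = insert a T := by
      ext i
      by_cases h : i = a ∨ i ∈ T <;>
        simp [h, Finset.mem_insert, show (1:ZMod 2) ≠ 0 from by decide] <;> tauto
    show (Finset.univ.filter _).card ≤ t + 1
    rw [hfil, Finset.card_insert_of_notMem haT]
    omega
  · intro j hj
    have h1 : Matrix.vecMul (fun i => if i = a ∨ i ∈ T then (1:ZMod 2) else 0) G j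
        = ∑ i : Fin n, (if i = a ∨ i ∈ T then (1:ZMod 2) else 0) * G i j := by
      simp [Matrix.vecMul, dotProduct]
    rw [h1]
    have h2 : ∑ i : Fin n, (if i = a ∨ i ∈ T then (1:ZMod 2) else 0) * G i j
        = ∑ i ∈ insert a T, G i j := by
      rw [← Finset.sum_filter_of_ne (s := Finset.univ)
        (p := fun i => i = a ∨ i ∈ T) (f := fun i => (if i = a ∨ i ∈ T then (1:ZMod 2) else 0) * G i j)]
      · apply Finset.sum_congr
        · ext i
          simp [Finset.mem_insert]
        · intro i hi
          have : i = a ∨ i ∈ T := by simpa [Finset.mem_insert] using hi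
          rw [if_pos this, one_mul]
      · intro i _ hne
        by_contra hcon
        exact hne (by rw [if_neg hcon, zero_mul])
    rw [h2, Finset.sum_insert haT, hTrep j hj]
    exact zmod2_addself _

lemma converse {p : ℝ} (hp0 : 0 < p) (hp1 : p < 1) {n k t : ℕ} (hkn : k < n)
    (G : Matrix (Fin n) (Fin k) (ZMod 2))
    (g : (Fin k → ZMod 2) → (Fin n → ZMod 2)) (hg : IsLocal g t) :
    (p * (1 - p)) ^ (t + 1) / 2 ≤ pmeas p {x | g (Matrix.vecMul x G) ≠ x} := by
  choose N hNc hNloc using hg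
  obtain ⟨a, w, hwa, hww, hwv⟩ := exists_low_weight hkn G N hNc
  apply pmeas_pair hp0 hp1 w hww
  intro x
  by_cases hx : x ∈ {x | g (Matrix.vecMul x G) ≠ x}
  · exact Or.inl hx
  · right
    simp only [Set.mem_setOf_eq, not_not] at hx
    simp only [Set.mem_setOf_eq]
    intro heq
    have hagree : ∀ j ∈ N a, Matrix.vecMul (x + w) G j = Matrix.vecMul x G j := by
      intro j hj
      rw [Matrix.add_vecMul]
      show Matrix.vecMul x G j + Matrix.vecMul w G j = _
      rw [hwv j hj, add_zero]
    have h1 : g (Matrix.vecMul (x + w) G) a = g (Matrix.vecMul x G) a :=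
      hNloc a _ _ hagree
    have h2 : g (Matrix.vecMul (x + w) G) a = (x + w) a := by rw [heq]
    rw [hx] at h1
    rw [h1] at h2
    have h3 : (x + w) a = x a + 1 := by
      show x a + w a = x a + 1
      rw [hwa]
    rw [h3] at h2
    exact zmod2_neadd1 _ h2

lemma kstar_eq {p : ℝ} (hp0 : 0 < p) (hp1 : p < 1) {n t : ℕ} (ht : 1 ≤ t) {ε : ℝ}
    (hε0 : 0 < ε) (hεδ : ε < (p * (1 - p)) ^ (t + 1) / 2) :
    kstarLin p n t ε = n := by
  have hn : n ∈ {k : ℕ | ∃ (G : Matrix (Fin n) (Fin k) (ZMod 2))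
      (g : (Fin k → ZMod 2) → (Fin n → ZMod 2)), IsLocal g t ∧
        pmeas p {x | g (Matrix.vecMul x G) ≠ x} ≤ ε} := by
    refine ⟨1, id, ?_, ?_⟩
    · intro a
      refine ⟨{a}, by simpa using ht, ?_⟩
      intro y y' h
      exact h a (Finset.mem_singleton_self a)
    · have hset : {x : Fin n → ZMod 2 | id (Matrix.vecMul x 1) ≠ x} = ∅ := by
        ext x
        simp [Matrix.vecMul_one]
      rw [hset]
      have : pmeas p (∅ : Set (Fin n → ZMod 2)) = 0 := by
        unfold pmeas
        simp
      rw [this]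
      exact hε0.le
  apply le_antisymm
  · exact Nat.sInf_le hn
  · apply le_csInf ⟨n, hn⟩
    rintro k ⟨G, g, hloc, herr⟩
    by_contra hk
    push_neg at hk
    exact absurd (le_trans (converse hp0 hp1 hk G g hloc) herr) (not_le.2 hεδ)

theorem stmt12 (p : ℝ) (hp0 : 0 < p) (hp1 : p < 1) (t : ℕ) (ht : 1 ≤ t) :
    Tendsto
      (fun ε : ℝ =>
        Filter.limsup (fun n : ℕ => (kstarLin p n t ε : ℝ) / n) atTop)
      (nhdsWithin 0 (Set.Ioi 0)) (nhds 1) := by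
  set δ : ℝ := (p * (1 - p)) ^ (t + 1) / 2 with hδ
  have hδpos : 0 < δ := by
    have : 0 < p * (1 - p) := by nlinarith
    positivity
  apply Filter.Tendsto.congr' ?_ (tendsto_const_nhds (x := (1:ℝ)))
  have hIoo : Set.Ioo (0:ℝ) δ ∈ nhdsWithin (0:ℝ) (Set.Ioi 0) :=
    Ioo_mem_nhdsGT_of_mem ⟨le_refl 0, hδpos⟩
  filter_upwards [hIoo] with ε hε
  have heq : (fun n : ℕ => (kstarLin p n t ε : ℝ) / n) =ᶠ[atTop] fun _ => (1:ℝ) := by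
    rw [Filter.eventuallyEq_iff_exists_mem]
    refine ⟨{n | 1 ≤ n}, Filter.mem_atTop 1, ?_⟩
    intro n hn
    have hk : kstarLin p n t ε = n := kstar_eq hp0 hp1 ht hε.1 hε.2
    show (kstarLin p n t ε : ℝ) / n = 1
    rw [hk, div_self]
    refine Nat.cast_ne_zero.2 ?_
    have h1n : 1 ≤ n := hn
    omega
  rw [Filter.limsup_congr heq, Filter.limsup_const]

end
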